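/- Suppose a family of gluing maps G_I satisfies the two compatibility identities of Theorem 3.3: (1) G_{I₁}(x,Λ) = G_{I₂}(G_{I₁}(x, Λ(I₁−I₂)), Λ_{I₁,I₂}) for I₂ ⪯ I₁, and (2) G_{I₁·I₂}(x₁·x₂, Λ₁·Λ₂) = (G_{I₁}(x₁,Λ₁), G_{I₂}(x₂,Λ₂)). Then the pairwise gluing γ₁ #_λ γ₂ := G_{{p,r,q}}(γ₁,γ₂,λ) is associative: (γ₁ #_{λ₁} γ₂) #_{λ₂} γ₃ = γ₁ #_{λ₁} (γ₂ #_{λ₂} γ₃) for λ₁, λ₂ in a sufficiently small interval (0,ε). -/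
import Mathlib


/-!
STATEMENT 11: If a family of gluing maps G_I satisfies the two compatibility identities
of Theorem 3.3 — (1) G_{I₁}(x,Λ) = G_{I₂}(G_{I₁}(x,Λ(I₁−I₂)), Λ_{I₁,I₂}) for I₂ ⪯ I₁,
and (2) G_{I₁·I₂}(x₁·x₂, Λ₁·Λ₂) = (G_{I₁}(x₁,Λ₁), G_{I₂}(x₂,Λ₂)) — then the pairwise
gluing γ₁ #_λ γ₂ := G_{{p,r,q}}(γ₁,γ₂,λ) is associative.  We record the compatibility
identities in the instances actually involving the chains {p₀,p₁,p₂}, {p₁,p₂,p₃},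
{p₀,p₂,p₃}, {p₀,p₁,p₃} and {p₀,p₁,p₂,p₃}; `ι` denotes the embedding
M̄(p,r) × M̄(r,q) ↪ M̄(p,q) of a boundary face.
-/

theorem gluing_associative
    (Ω : Type) [PartialOrder Ω]
    -- the compactified moduli spaces `M̄(p,q)`
    (Mb : Ω → Ω → Type)
    -- the face embeddings `M̄(p,r) × M̄(r,q) ↪ M̄(p,q)`
    (ι : ∀ p r q : Ω, Mb p r × Mb r q → Mb p q)
    -- gluing maps for chains of length 1 and 2
    (G2 : ∀ p r q : Ω, Mb p r × Mb r q → ℝ → Mb p q)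
    (G3 : ∀ p r s q : Ω, Mb p r × Mb r s × Mb s q → ℝ × ℝ → Mb p q)
    (ε : ℝ) (hε : 0 < ε)
    -- identity (2), gluing the first pair (the tail chain has length 0)
    (h2a : ∀ (p r s q : Ω) (x : Mb p r) (y : Mb r s) (z : Mb s q) (l : ℝ),
      0 ≤ l → l < ε → G3 p r s q (x, y, z) (l, 0) = ι p s q (G2 p r s (x, y) l, z))
    -- identity (2), gluing the second pair (the head chain has length 0)
    (h2b : ∀ (p r s q : Ω) (x : Mb p r) (y : Mb r s) (z : Mb s q) (l : ℝ),
      0 ≤ l → l < ε → G3 p r s q (x, y, z) (0, l) = ι p r q (x, G2 r s q (y, z) l))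
    -- identity (1), with I₁ = {p,r,s,q} and I₂ = {p,s,q}
    (h1a : ∀ (p r s q : Ω) (w : Mb p r × Mb r s × Mb s q) (l₁ l₂ : ℝ)
      (a : Mb p s) (b : Mb s q), 0 ≤ l₁ → l₁ < ε → 0 ≤ l₂ → l₂ < ε →
      G3 p r s q w (l₁, 0) = ι p s q (a, b) →
      G3 p r s q w (l₁, l₂) = G2 p s q (a, b) l₂)
    -- identity (1), with I₁ = {p,r,s,q} and I₂ = {p,r,q}
    (h1b : ∀ (p r s q : Ω) (w : Mb p r × Mb r s × Mb s q) (l₁ l₂ : ℝ)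
      (a : Mb p r) (b : Mb r q), 0 ≤ l₁ → l₁ < ε → 0 ≤ l₂ → l₂ < ε →
      G3 p r s q w (0, l₂) = ι p r q (a, b) →
      G3 p r s q w (l₁, l₂) = G2 p r q (a, b) l₁)
    -- three consecutive trajectories
    (p₀ p₁ p₂ p₃ : Ω) (h01 : p₁ < p₀) (h12 : p₂ < p₁) (h23 : p₃ < p₂)
    (γ₁ : Mb p₀ p₁) (γ₂ : Mb p₁ p₂) (γ₃ : Mb p₂ p₃)
    (l₁ l₂ : ℝ) (hl₁ : l₁ ∈ Set.Ioo 0 ε) (hl₂ : l₂ ∈ Set.Ioo 0 ε) :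
    -- (γ₁ #_{l₁} γ₂) #_{l₂} γ₃ = γ₁ #_{l₁} (γ₂ #_{l₂} γ₃)
    G2 p₀ p₂ p₃ (G2 p₀ p₁ p₂ (γ₁, γ₂) l₁, γ₃) l₂ =
      G2 p₀ p₁ p₃ (γ₁, G2 p₁ p₂ p₃ (γ₂, γ₃) l₂) l₁ := by
  obtain ⟨h1, h2⟩ := hl₁
  obtain ⟨h3, h4⟩ := hl₂
  have e1 := h1a p₀ p₁ p₂ p₃ (γ₁, γ₂, γ₃) l₁ l₂ (G2 p₀ p₁ p₂ (γ₁, γ₂) l₁) γ₃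
    h1.le h2 h3.le h4 (h2a p₀ p₁ p₂ p₃ γ₁ γ₂ γ₃ l₁ h1.le h2)
  have e2 := h1b p₀ p₁ p₂ p₃ (γ₁, γ₂, γ₃) l₁ l₂ γ₁ (G2 p₁ p₂ p₃ (γ₂, γ₃) l₂)
    h1.le h2 h3.le h4 (h2b p₀ p₁ p₂ p₃ γ₁ γ₂ γ₃ l₂ h3.le h4)
  rw [← e1, ← e2]
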